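/- Let G be a finite simple graph on a vertex set V with n = |V| ≥ 3. Let H = (S, C) be the hypergraph with vertex set S = ZMod n and hyperedge set C = { {i, i+1} : i ∈ ZMod n }. Then there exists a bijection f : ZMod n → V such that for every hyperedge {i, i+1} ∈ C the subgraph of G induced by {f(i), f(i+1)} is connected, if and only if G has a Hamiltonian cycle. -/

import Mathlib

open SimpleGraph Walk

private lemma pair_connected_iff {V : Type*} (G : SimpleGraph V) {x y : V} (hxy : x ≠ y) :
    (G.induce ({x, y} : Set V)).Connected ↔ G.Adj x y := by
  constructor
  · intro hc
    obtain ⟨w⟩ := hc.preconnected ⟨x, by simp⟩ ⟨y, by simp⟩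
    have hnil : ¬ w.Nil := by
      intro h
      exact hxy (congrArg Subtype.val (Walk.Nil.eq h))
    have hadj : (G.induce ({x, y} : Set V)).Adj ⟨x, by simp⟩ (w.getVert 1) := w.adj_snd hnil
    have hz := (w.getVert 1).2
    simp only [Set.mem_insert_iff, Set.mem_singleton_iff] at hz
    rcases hz with hz | hz
    · exfalso
      have : (⟨x, by simp⟩ : ({x, y} : Set V)) = w.getVert 1 := Subtype.ext hz.symm
      rw [← this] at hadj
      exact (G.induce _).irrefl hadj
    · have h2 : (G.induce ({x, y} : Set V)).Adj ⟨x, by simp⟩ ⟨y, by simp⟩ := by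
        rwa [show (⟨y, by simp⟩ : ({x, y} : Set V)) = w.getVert 1 from Subtype.ext hz.symm]
      simpa using h2
  · intro hadj
    haveI : Nonempty ({x, y} : Set V) := ⟨⟨x, by simp⟩⟩
    refine Connected.mk ?_
    intro u v
    have hu := u.2; have hv := v.2
    simp only [Set.mem_insert_iff, Set.mem_singleton_iff] at hu hv
    have key : ∀ (a b : ({x, y} : Set V)), (a : V) = x → (b : V) = y →
        (G.induce ({x, y} : Set V)).Reachable a b := by
      intro a b ha hb
      refine Adj.reachable ?_
      simp [ha, hb, hadj]
    rcases hu with hu | hu <;> rcases hv with hv | hv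
    · exact (Subtype.ext (hu.trans hv.symm) : u = v) ▸ Reachable.refl u
    · exact key u v hu hv
    · exact (key v u hv hu).symm
    · exact (Subtype.ext (hu.trans hv.symm) : u = v) ▸ Reachable.refl u

private def chainWalk {V : Type*} (G : SimpleGraph V) {n : ℕ} (f : ZMod n → V)
    (h : ∀ i, G.Adj (f i) (f (i + 1))) : (k : ℕ) → G.Walk (f 0) (f (k : ZMod n))
  | 0 => Walk.nil.copy rfl (congrArg f (by push_cast; ring))
  | k + 1 => ((chainWalk G f h k).concat (h (k : ZMod n))).copy rfl
      (congrArg f (by push_cast; ring))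

private lemma chainWalk_support {V : Type*} (G : SimpleGraph V) {n : ℕ} (f : ZMod n → V)
    (h : ∀ i, G.Adj (f i) (f (i + 1))) (k : ℕ) :
    (chainWalk G f h k).support = (List.range (k + 1)).map (fun j : ℕ => f (j : ZMod n)) := by
  induction k with
  | zero =>
    show _ = List.map (fun j : ℕ => f (j : ZMod n)) [0]
    simp [chainWalk]
  | succ k ih =>
    rw [chainWalk, Walk.support_copy, Walk.support_concat, ih, List.range_succ (n := k + 1)]
    simp

private lemma chainWalk_edges {V : Type*} (G : SimpleGraph V) {n : ℕ} (f : ZMod n → V)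
    (h : ∀ i, G.Adj (f i) (f (i + 1))) (k : ℕ) :
    (chainWalk G f h k).edges
      = (List.range k).map (fun j : ℕ => s(f (j : ZMod n), f ((j : ZMod n) + 1))) := by
  induction k with
  | zero => norm_num [chainWalk]
  | succ k ih =>
    rw [chainWalk, Walk.edges_copy, Walk.edges_concat, ih, List.range_succ (n := k)]
    simp

private lemma walk_support_getElem {V : Type*} {G : SimpleGraph V} {u v : V} (p : G.Walk u v) :
    ∀ (k : ℕ) (hk : k < p.support.length), p.support[k] = p.getVert k := by
  induction p with
  | nil =>
    intro k hk
    simp only [Walk.support_nil, List.length_singleton] at hk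
    interval_cases k
    simp
  | cons h q ih =>
    intro k hk
    match k with
    | 0 => simp
    | k + 1 =>
      simp only [Walk.support_cons, List.getElem_cons_succ, Walk.getVert_cons_succ]
      exact ih k (by simpa [Walk.length_support] using hk)

theorem stmt0 {V : Type*} [Fintype V] [DecidableEq V] (G : SimpleGraph V)
    (n : ℕ) (hn : n = Fintype.card V) (h3 : 3 ≤ n) :
    (∃ f : ZMod n → V, Function.Bijective f ∧
        ∀ i : ZMod n, (G.induce ({f i, f (i + 1)} : Set V)).Connected) ↔
      ∃ (a : V) (p : G.Walk a a), p.IsHamiltonianCycle := by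
  haveI : NeZero n := ⟨by omega⟩
  haveI : Fact (1 < n) := ⟨by omega⟩
  constructor
  · rintro ⟨f, hf, hconn⟩
    have hne : ∀ i : ZMod n, f i ≠ f (i + 1) := by
      intro i hEq
      have h1 : i = i + 1 := hf.injective hEq
      have : (1 : ZMod n) = 0 := (left_eq_add.mp h1)
      exact one_ne_zero this
    have hadj : ∀ i, G.Adj (f i) (f (i + 1)) := fun i =>
      (pair_connected_iff G (hne i)).mp (hconn i)
    have hcast : ∀ j1 ∈ List.range n, ∀ j2 ∈ List.range n,
        (j1 : ZMod n) = (j2 : ZMod n) → j1 = j2 := by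
      intro j1 h1 j2 h2 h
      have := congrArg ZMod.val h
      rwa [ZMod.val_cast_of_lt (List.mem_range.mp h1),
        ZMod.val_cast_of_lt (List.mem_range.mp h2)] at this
    have h2ne : (2 : ZMod n) ≠ 0 := by
      intro h
      have : ((2 : ℕ) : ZMod n) = 0 := by push_cast; exact h
      rw [ZMod.natCast_eq_zero_iff] at this
      have := Nat.le_of_dvd (by norm_num) this
      omega
    set p0 := (chainWalk G f hadj n).copy rfl (congrArg f (ZMod.natCast_self n)) with hp0
    have hsup : p0.support = (List.range (n + 1)).map (fun j : ℕ => f (j : ZMod n)) := by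
      rw [hp0, Walk.support_copy, chainWalk_support]
    have hedg : p0.edges
        = (List.range n).map (fun j : ℕ => s(f (j : ZMod n), f ((j : ZMod n) + 1))) := by
      rw [hp0, Walk.edges_copy, chainWalk_edges]
    have htail : p0.support.tail = (List.range n).map (fun j : ℕ => f (((j + 1 : ℕ)) : ZMod n)) := by
      rw [hsup, List.range_succ_eq_map, List.map_cons, List.tail_cons, List.map_map]
      rfl
    have htailnodup : p0.support.tail.Nodup := by
      rw [htail]
      refine List.Nodup.map_on ?_ List.nodup_range
      intro j1 h1 j2 h2 hEq
      have h' : ((j1 + 1 : ℕ) : ZMod n) = ((j2 + 1 : ℕ) : ZMod n) := hf.injective hEq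
      push_cast at h'
      exact hcast _ h1 _ h2 (by exact add_right_cancel h')
    have hcyc : p0.IsCycle := by
      refine ⟨⟨⟨?_⟩, ?_⟩, htailnodup⟩
      · rw [hedg]
        refine List.Nodup.map_on ?_ List.nodup_range
        intro j1 h1 j2 h2 hEq
        rw [Sym2.eq_iff] at hEq
        rcases hEq with ⟨ha, hb⟩ | ⟨ha, hb⟩
        · exact hcast _ h1 _ h2 (hf.injective ha)
        · exfalso
          have e1 : (j1 : ZMod n) = (j2 : ZMod n) + 1 := hf.injective ha
          have e2 : (j1 : ZMod n) + 1 = (j2 : ZMod n) := hf.injective hb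
          have e3 : (j1 : ZMod n) = (j1 : ZMod n) + 2 := by
            linear_combination e1 - e2
          exact h2ne (left_eq_add.mp e3)
      · intro hEq
        have hl := congrArg List.length hsup
        rw [hEq] at hl
        simp at hl
        omega
    refine ⟨f 0, p0,
      Walk.isHamiltonianCycle_iff_isCycle_and_support_count_tail_eq_one.mpr ⟨hcyc, ?_⟩⟩
    intro a
    obtain ⟨i, rfl⟩ := hf.surjective a
    refine List.count_eq_one_of_mem htailnodup ?_
    rw [htail, List.mem_map]
    refine ⟨(i - 1).val, List.mem_range.mpr (ZMod.val_lt _), ?_⟩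
    push_cast
    simp [ZMod.natCast_val, ZMod.cast_id]
  · rintro ⟨a, p, hp⟩
    have hlen : p.length = n := by rw [hp.length_eq, hn]
    have hsuplen : p.support.length = n + 1 := by rw [Walk.length_support, hlen]
    have htail_len : p.support.tail.length = n := by simp [hsuplen]
    have htailget : ∀ (k : ℕ) (hk : k < n),
        p.support.tail[k]'(by omega) = p.getVert (k + 1) := by
      intro k hk
      rw [List.getElem_tail]
      exact walk_support_getElem p (k + 1) (by omega)
    refine ⟨fun i => p.getVert (i.val + 1), ?_, ?_⟩
    · refine (Fintype.bijective_iff_injective_and_card _).mpr ⟨?_, by rw [ZMod.card, hn]⟩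
      intro i j hEq
      have hi : i.val < n := i.val_lt
      have hj : j.val < n := j.val_lt
      have e1 : p.support.tail[i.val]'(by omega) = p.support.tail[j.val]'(by omega) := by
        rw [htailget _ hi, htailget _ hj]
        exact hEq
      have := (List.Nodup.getElem_inj_iff hp.isCycle.support_nodup).mp e1
      exact ZMod.val_injective n this
    · intro i
      have hi : i.val < n := i.val_lt
      have hadj : G.Adj (p.getVert (i.val + 1)) (p.getVert ((i + 1).val + 1)) := by
        have hv : (i + 1).val = (i.val + 1) % n := by
          rw [ZMod.val_add, ZMod.val_one]
        rcases Nat.lt_or_ge (i.val + 1) n with hlt | hge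
        · rw [hv, Nat.mod_eq_of_lt hlt]
          exact p.adj_getVert_succ (by omega)
        · have heq : i.val + 1 = n := by omega
          rw [hv, heq, Nat.mod_self]
          have h1 : p.getVert n = a := by
            rw [← hlen]; exact p.getVert_length
          rw [h1]
          have := p.adj_getVert_succ (show 0 < p.length by omega)
          rwa [p.getVert_zero] at this
      exact (pair_connected_iff G hadj.ne).mpr hadj
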